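/- Let G be a finite group and E an irreducible complex representation of G ≀ S_n. If d ≥ n, then for any free G-representation V of rank d over ℂ, the vector space E ⊗_{ℂ[G≀S_n]} V^{⊗n} is nonzero. -/

import Mathlib

open scoped TensorProduct

/-- The permutation action of `S_n` on `Gⁿ`. -/
def permMulAut (G : Type) [Group G] (n : ℕ) : Equiv.Perm (Fin n) →* MulAut (Fin n → G) :=
  MonoidHom.mk' (fun σ => MulEquiv.arrowCongr σ (MulEquiv.refl G)) (fun a b => by ext; rfl)

/-- The wreath product `G ≀ S_n = Gⁿ ⋊ S_n`. -/
def Wreath (G : Type) [Group G] (n : ℕ) : Type :=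
  SemidirectProduct (Fin n → G) (Equiv.Perm (Fin n)) (permMulAut G n)

instance (G : Type) [Group G] (n : ℕ) : Group (Wreath G n) :=
  inferInstanceAs (Group (SemidirectProduct _ _ _))

variable (G : Type) [Group G] [Finite G]
variable (V : Type) [AddCommGroup V] [Module ℂ V] (ρV : Representation ℂ G V)

/-- The action of the wreath product `G ≀ S_n` on `V^{⊗n}`: `Gⁿ` acts factorwise and
`S_n` permutes the tensor factors. -/
noncomputable def wreathTensorAct (n : ℕ) (w : Wreath G n) :
    (⨂[ℂ] (_ : Fin n), V) →ₗ[ℂ] (⨂[ℂ] (_ : Fin n), V) :=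
  (PiTensorProduct.map (fun i => ρV (w.left i))).comp
    (PiTensorProduct.reindex ℂ (fun _ : Fin n => V) w.right).toLinearMap

/-- `E ⊗_{ℂ[G≀Sₙ]} V^{⊗n}`, realized as the coinvariants of the diagonal
`G ≀ S_n`-action on `E ⊗_ℂ V^{⊗n}`. -/
noncomputable def schurWeylSpace (n : ℕ) (E : FDRep ℂ (Wreath G n)) :=
  (E ⊗[ℂ] (⨂[ℂ] (_ : Fin n), V)) ⧸
    Submodule.span ℂ {x | ∃ (w : Wreath G n) (e : E) (t : ⨂[ℂ] (_ : Fin n), V),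
      x = (E.ρ w e) ⊗ₜ[ℂ] (wreathTensorAct G V ρV n w t) - e ⊗ₜ[ℂ] t}

/-- The regular representation of `G` on `ℂ[G] = (G → ℂ)`. -/
noncomputable def regularRep (g : G) : (G → ℂ) →ₗ[ℂ] (G → ℂ) :=
  LinearMap.funLeft ℂ ℂ (fun x => g⁻¹ * x)

lemma wreath_act_tprod (n : ℕ) (w : Wreath G n) (v : Fin n → V) :
    wreathTensorAct G V ρV n w (PiTensorProduct.tprod ℂ v)
      = PiTensorProduct.tprod ℂ (fun i => ρV (w.left i) (v (w.right.symm i))) := by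
  simp [wreathTensorAct]

lemma wreath_left_mul (n : ℕ) (w u : Wreath G n) (i : Fin n) :
    (w * u).left i = w.left i * u.left (w.right.symm i) := rfl

lemma wreath_right_symm_mul (n : ℕ) (w u : Wreath G n) (i : Fin n) :
    (w * u).right.symm i = u.right.symm (w.right.symm i) := rfl

lemma wreath_act_mul (n : ℕ) (w u : Wreath G n) (t : ⨂[ℂ] (_ : Fin n), V) :
    wreathTensorAct G V ρV n (w * u) t
      = wreathTensorAct G V ρV n w (wreathTensorAct G V ρV n u t) := by
  have h : wreathTensorAct G V ρV n (w * u)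
      = (wreathTensorAct G V ρV n w).comp (wreathTensorAct G V ρV n u) := by
    apply PiTensorProduct.ext
    apply MultilinearMap.ext
    intro v
    simp only [LinearMap.compMultilinearMap_apply, LinearMap.comp_apply,
      wreath_act_tprod]
    congr 1
    funext i
    rw [wreath_left_mul, wreath_right_symm_mul, map_mul]
    rfl
  rw [h]; rfl

/-- The coefficient functional on `V^{⊗n}`. -/
noncomputable def coeffFun (n d : ℕ) (φ : V ≃ₗ[ℂ] (Fin d → (G → ℂ)))
    (emb : Fin n → Fin d) : (⨂[ℂ] (_ : Fin n), V) →ₗ[ℂ] ℂ :=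
  PiTensorProduct.lift ((MultilinearMap.mkPiAlgebra ℂ (Fin n) ℂ).compLinearMap
    (fun i => (LinearMap.proj (1 : G)).comp ((LinearMap.proj (emb i)).comp
      (φ : V →ₗ[ℂ] (Fin d → (G → ℂ))))))

lemma coeffFun_tprod (n d : ℕ) (φ : V ≃ₗ[ℂ] (Fin d → (G → ℂ)))
    (emb : Fin n → Fin d) (v : Fin n → V) :
    coeffFun G V n d φ emb (PiTensorProduct.tprod ℂ v)
      = ∏ i : Fin n, φ (v i) (emb i) 1 := by
  simp [coeffFun]

/-- Schur–Weyl duality for wreath products, nonvanishing part: if `E` is an irreducible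
complex representation of `G ≀ S_n`, `V` is a free `G`-representation of rank `d` (i.e.
`V ≅ ℂ[G]^d` equivariantly), and `d ≥ n`, then `E ⊗_{ℂ[G≀Sₙ]} V^{⊗n} ≠ 0`. -/
theorem stmt_18 (n d : ℕ) (hdn : n ≤ d)
    (φ : V ≃ₗ[ℂ] (Fin d → (G → ℂ)))
    (hφ : ∀ (g : G) (v : V) (i : Fin d), φ (ρV g v) i = regularRep G g (φ v i))
    (E : FDRep ℂ (Wreath G n)) (hE : CategoryTheory.Simple E) :
    Nontrivial (schurWeylSpace G V ρV n E) := by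
  classical
  haveI : Finite (Wreath G n) := Finite.of_equiv ((Fin n → G) × Equiv.Perm (Fin n))
    { toFun := fun p => ⟨p.1, p.2⟩, invFun := fun w => (w.left, w.right),
      left_inv := fun p => rfl, right_inv := fun w => rfl }
  haveI := Fintype.ofFinite (Wreath G n)
  -- E is nontrivial
  haveI : Nontrivial E := by
    by_contra h
    rw [not_nontrivial_iff_subsingleton] at h
    apply CategoryTheory.id_nonzero E
    apply Action.hom_ext
    ext x
    exact @Subsingleton.elim _ h _ _
  obtain ⟨e₀, he₀⟩ := exists_ne (0 : E)
  obtain ⟨lam, hlam⟩ : ∃ lam : Module.Dual ℂ E, lam e₀ ≠ 0 := by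
    by_contra h
    push_neg at h
    exact he₀ ((Module.forall_dual_apply_eq_zero_iff ℂ e₀).mp h)
  set emb : Fin n → Fin d := Fin.castLE hdn with hemb
  have hembinj : Function.Injective emb := Fin.castLE_injective hdn
  set b : Fin n → (Fin d → G → ℂ) :=
    fun j a x => if a = emb j ∧ x = 1 then 1 else 0 with hb
  set v₀ : Fin n → V := fun j => φ.symm (b j) with hv₀
  set t₀ : ⨂[ℂ] (_ : Fin n), V := PiTensorProduct.tprod ℂ v₀ with ht₀
  set μ : (⨂[ℂ] (_ : Fin n), V) →ₗ[ℂ] ℂ := coeffFun G V n d φ emb with hμ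
  have hφv₀ : ∀ j, φ (v₀ j) = b j := fun j => φ.apply_symm_apply (b j)
  have key : ∀ w : Wreath G n,
      μ (wreathTensorAct G V ρV n w t₀) = if w = 1 then 1 else 0 := by
    intro w
    rw [ht₀, wreath_act_tprod, hμ, coeffFun_tprod]
    have hfac : ∀ i : Fin n, φ (ρV (w.left i) (v₀ (w.right.symm i))) (emb i) 1
        = if w.right.symm i = i ∧ w.left i = 1 then 1 else 0 := by
      intro i
      rw [hφ]
      show (φ (v₀ (w.right.symm i)) (emb i)) ((w.left i)⁻¹ * 1) = _
      rw [hφv₀]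
      simp only [hb, mul_one]
      by_cases h1 : w.right.symm i = i ∧ w.left i = 1
      · obtain ⟨h1a, h1b⟩ := h1
        rw [h1a, h1b]
        simp
      · rw [if_neg h1, if_neg]
        intro ⟨ha, hx⟩
        exact h1 ⟨(hembinj ha).symm, by rwa [inv_eq_one] at hx⟩
    by_cases hw : w = 1
    · subst hw
      rw [if_pos rfl]
      apply Finset.prod_eq_one
      intro i _
      rw [hfac i, if_pos]
      exact ⟨rfl, rfl⟩
    · rw [if_neg hw]
      have : ∃ i : Fin n, ¬(w.right.symm i = i ∧ w.left i = 1) := by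
        by_contra hc
        push_neg at hc
        apply hw
        have hl : w.left = 1 := funext fun i => ((hc i).2)
        have hr : w.right = 1 := Equiv.ext fun i =>
          ((by simpa using (hc (w.right i)).1 : i = w.right i)).symm
        exact SemidirectProduct.ext hl hr
      obtain ⟨i, hi⟩ := this
      apply Finset.prod_eq_zero (Finset.mem_univ i)
      rw [hfac i, if_neg hi]
  -- the invariant bilinear pairing
  let F : E → (⨂[ℂ] (_ : Fin n), V) → ℂ :=
    fun e t => ∑ w : Wreath G n, lam (E.ρ w e) * μ (wreathTensorAct G V ρV n w t)
  let B : E →ₗ[ℂ] (⨂[ℂ] (_ : Fin n), V) →ₗ[ℂ] ℂ :=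
    LinearMap.mk₂ ℂ F
      (fun e e' t => by
        simp [F, map_add, add_mul, Finset.sum_add_distrib])
      (fun c e t => by
        simp [F, map_smul, Finset.mul_sum, smul_eq_mul, mul_assoc])
      (fun e t t' => by
        simp [F, map_add, mul_add, Finset.sum_add_distrib])
      (fun c e t => by
        simp [F, map_smul, Finset.mul_sum, smul_eq_mul, mul_left_comm])
  let f : (E ⊗[ℂ] (⨂[ℂ] (_ : Fin n), V)) →ₗ[ℂ] ℂ := TensorProduct.lift B
  have hftmul : ∀ (e : E) (t : ⨂[ℂ] (_ : Fin n), V), f (e ⊗ₜ[ℂ] t) = F e t :=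
    fun e t => rfl
  set N : Submodule ℂ (E ⊗[ℂ] (⨂[ℂ] (_ : Fin n), V)) :=
    Submodule.span ℂ {x | ∃ (w : Wreath G n) (e : E) (t : ⨂[ℂ] (_ : Fin n), V),
      x = (E.ρ w e) ⊗ₜ[ℂ] (wreathTensorAct G V ρV n w t) - e ⊗ₜ[ℂ] t} with hN
  have hker : N ≤ LinearMap.ker f := by
    rw [hN, Submodule.span_le]
    rintro x ⟨u, e, t, rfl⟩
    simp only [SetLike.mem_coe, LinearMap.mem_ker, map_sub, hftmul]
    rw [sub_eq_zero]
    calc F (E.ρ u e) (wreathTensorAct G V ρV n u t)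
        = ∑ w : Wreath G n, lam (E.ρ (w * u) e)
            * μ (wreathTensorAct G V ρV n (w * u) t) := by
          apply Finset.sum_congr rfl
          intro w _
          rw [map_mul, wreath_act_mul]
          rfl
      _ = F e t := by
          exact Fintype.sum_equiv (Equiv.mulRight u)
            (fun w => lam (E.ρ (w * u) e) * μ (wreathTensorAct G V ρV n (w * u) t))
            (fun w => lam (E.ρ w e) * μ (wreathTensorAct G V ρV n w t))
            (fun w => rfl)
  have hval : f (e₀ ⊗ₜ[ℂ] t₀) = lam e₀ := by
    rw [hftmul]
    show ∑ w : Wreath G n, lam (E.ρ w e₀) * μ (wreathTensorAct G V ρV n w t₀) = lam e₀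
    rw [Finset.sum_congr rfl (fun w _ => by rw [key w])]
    rw [Finset.sum_eq_single (1 : Wreath G n)]
    · simp
    · intro w _ hw
      rw [if_neg hw, mul_zero]
    · intro h
      exact absurd (Finset.mem_univ _) h
  show Nontrivial ((E ⊗[ℂ] (⨂[ℂ] (_ : Fin n), V)) ⧸ N)
  refine ⟨⟨Submodule.Quotient.mk (e₀ ⊗ₜ[ℂ] t₀), 0, fun hcontra => ?_⟩⟩
  have h0 : f (e₀ ⊗ₜ[ℂ] t₀) = 0 := by
    have := congrArg (N.liftQ f hker) hcontra
    simpa using this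
  rw [hval] at h0
  exact hlam h0
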